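/- Assume r and θ are nonconstant and the parametrization is proper. Then the curve has infinitely many self-intersection points if and only if the set of integers k for which at least one of the two systems (*)₁: r(t) = r(s) and θ(t) = θ(s) + 2kπ, or (*)₂: r(t) = −r(s) and θ(t) = θ(s) + (2k+1)π, admits a solution (t,s) ∈ Ω × Ω with t ≠ s, is infinite. -/

import Mathlib

/-- The domain Ω = {t : B(t) ≠ 0 and D(t) ≠ 0}. -/
def polarDomain (B D : Polynomial ℝ) : Set ℝ :=
  {t : ℝ | B.eval t ≠ 0 ∧ D.eval t ≠ 0}

/-- The rational function defined by a pair of polynomials, e.g. r(t) = A(t)/B(t). -/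
noncomputable def ratFun (A B : Polynomial ℝ) (t : ℝ) : ℝ :=
  A.eval t / B.eval t

/-- The curve in Cartesian coordinates: P(t) = (r(t)·cos(θ(t)), r(t)·sin(θ(t))). -/
noncomputable def polarCurve (A B C D : Polynomial ℝ) (t : ℝ) : ℝ × ℝ :=
  (ratFun A B t * Real.cos (ratFun C D t), ratFun A B t * Real.sin (ratFun C D t))

/-- Properness: outside a finite set F, (r(t), θ(t)) = (r(s), θ(s)) implies t = s. -/
def IsProperPolar (A B C D : Polynomial ℝ) : Prop :=
  ∃ F : Set ℝ, F.Finite ∧ ∀ t s : ℝ, t ∈ polarDomain B D → s ∈ polarDomain B D →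
    t ∉ F → s ∉ F → ratFun A B t = ratFun A B s → ratFun C D t = ratFun C D s → t = s

/-- The set of self-intersection points of the curve. -/
noncomputable def selfIntersections (A B C D : Polynomial ℝ) : Set (ℝ × ℝ) :=
  {p : ℝ × ℝ | ∃ t s : ℝ, t ∈ polarDomain B D ∧ s ∈ polarDomain B D ∧ t ≠ s ∧
    polarCurve A B C D t = p ∧ polarCurve A B C D s = p}

open Polynomial Set Real

noncomputable section

/-- pigeonhole: a set with finite image and finite fibers is finite -/
lemma finite_of_image_fibers {α β : Type*} {s : Set α} (f : α → β)
    (h1 : (f '' s).Finite) (h2 : ∀ b, (s ∩ f ⁻¹' {b}).Finite) : s.Finite := by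
  have hsub : s ⊆ ⋃ b ∈ f '' s, (s ∩ f ⁻¹' {b}) := by
    intro x hx
    simp only [Set.mem_iUnion]
    exact ⟨f x, ⟨x, hx, rfl⟩, hx, rfl⟩
  exact ((h1.biUnion (fun b _ => h2 b))).subset hsub

lemma infinite_image_of_fibers {α β : Type*} {s : Set α} (f : α → β)
    (hs : s.Infinite) (h2 : ∀ b, (s ∩ f ⁻¹' {b}).Finite) : (f '' s).Infinite := by
  intro hfin
  exact hs (finite_of_image_fibers f hfin h2)

section Levels

variable {A B : Polynomial ℝ}

/-- A is not a constant multiple of B -/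
lemma not_const_mul (hAB : IsCoprime A B)
    (hr : ¬ (A.natDegree = 0 ∧ B.natDegree = 0)) (c : ℝ) : A ≠ Polynomial.C c * B := by
  intro h
  have hBA : B ∣ A := ⟨Polynomial.C c, by rw [h, mul_comm]⟩
  have hB : IsUnit B := hAB.isUnit_of_dvd' hBA dvd_rfl
  have hBdeg : B.natDegree = 0 := Polynomial.natDegree_eq_zero_of_isUnit hB
  have hAdeg : A.natDegree = 0 := by
    have h4 : (Polynomial.C c * B).natDegree ≤ (Polynomial.C c).natDegree + B.natDegree :=
      Polynomial.natDegree_mul_le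
    rw [h]
    simp [hBdeg] at h4
    omega
  exact hr ⟨hAdeg, hBdeg⟩

lemma ratFun_level_finite (hAB : IsCoprime A B)
    (hr : ¬ (A.natDegree = 0 ∧ B.natDegree = 0)) (c : ℝ) :
    {t : ℝ | B.eval t ≠ 0 ∧ ratFun A B t = c}.Finite := by
  have hne : A - Polynomial.C c * B ≠ 0 := sub_ne_zero.mpr (not_const_mul hAB hr c)
  apply (Polynomial.finite_setOf_isRoot hne).subset
  rintro t ⟨hBt, ht⟩
  have : A.eval t = c * B.eval t := by
    rw [ratFun, div_eq_iff hBt] at ht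
    linarith [ht]
  simp [Polynomial.IsRoot, this]

lemma ratFun_nonconst_ne_zero (hAB : IsCoprime A B)
    (hr : ¬ (A.natDegree = 0 ∧ B.natDegree = 0)) : A ≠ 0 := by
  intro h
  subst h
  have : IsUnit B := isCoprime_zero_left.mp hAB
  exact hr ⟨by simp, Polynomial.natDegree_eq_zero_of_isUnit this⟩

lemma ratFun_sq_level_finite (hAB : IsCoprime A B)
    (hr : ¬ (A.natDegree = 0 ∧ B.natDegree = 0)) (c : ℝ) :
    {t : ℝ | B.eval t ≠ 0 ∧ (ratFun A B t)^2 = c}.Finite := by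
  have hne : A^2 - Polynomial.C c * B^2 ≠ 0 := by
    intro h
    have h2 : A^2 = Polynomial.C c * B^2 := by linear_combination h
    have hdvd : B^2 ∣ A^2 := ⟨Polynomial.C c, by rw [h2, mul_comm]⟩
    have hu : IsUnit (B^2) := (hAB.pow (n := 2) (m := 2)).isUnit_of_dvd' hdvd dvd_rfl
    have hBdeg : B.natDegree = 0 := by
      have := Polynomial.natDegree_eq_zero_of_isUnit hu
      rw [Polynomial.natDegree_pow] at this
      omega
    have hAdeg : A.natDegree = 0 := by
      have h3 : (A^2).natDegree = (Polynomial.C c * B^2).natDegree := by rw [h2]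
      rw [Polynomial.natDegree_pow] at h3
      have h4 : (Polynomial.C c * B^2).natDegree ≤ (Polynomial.C c).natDegree + (B^2).natDegree :=
        Polynomial.natDegree_mul_le
      rw [Polynomial.natDegree_pow, hBdeg] at h4
      simp at h4
      omega
    exact hr ⟨hAdeg, hBdeg⟩
  apply (Polynomial.finite_setOf_isRoot hne).subset
  rintro t ⟨hBt, ht⟩
  have hA : (A.eval t)^2 = c * (B.eval t)^2 := by
    have : (A.eval t / B.eval t)^2 = c := ht
    field_simp at this
    linarith [this]
  simp [Polynomial.IsRoot, hA]

end Levels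

/-- evaluation of a bivariate polynomial at (r(t), θ(t)) -/
def evalRT (A B C D : Polynomial ℝ) (H : Polynomial (Polynomial ℝ)) (t : ℝ) : ℝ :=
  Polynomial.eval₂ (Polynomial.evalRingHom (ratFun A B t)) (ratFun C D t) H

lemma clear1 (A B : Polynomial ℝ) (h : Polynomial ℝ) (p : ℕ) (hp : h.natDegree < p + 1)
    (t : ℝ) (hB : B.eval t ≠ 0) :
    Polynomial.eval t (∑ i ∈ Finset.range (p+1),
      Polynomial.C (h.coeff i) * A^i * B^(p-i)) = (B.eval t)^p * h.eval (ratFun A B t) := by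
  rw [Polynomial.eval_finset_sum]
  rw [Polynomial.eval_eq_sum_range' hp]
  rw [Finset.mul_sum]
  apply Finset.sum_congr rfl
  intro i hi
  have hile : i ≤ p := by
    simp only [Finset.mem_range] at hi
    omega
  have hA : A.eval t = ratFun A B t * B.eval t := by
    unfold ratFun
    field_simp
  simp only [Polynomial.eval_mul, Polynomial.eval_pow, Polynomial.eval_C, hA]
  rw [mul_pow]
  have hBp : (B.eval t)^i * (B.eval t)^(p-i) = (B.eval t)^p := by
    rw [← pow_add]
    congr 1
    omega
  rw [← hBp]
  ring

lemma clear2 (A B C D : Polynomial ℝ) (H : Polynomial (Polynomial ℝ)) :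
    ∃ (p q : ℕ) (W : Polynomial ℝ), ∀ t : ℝ, B.eval t ≠ 0 → D.eval t ≠ 0 →
      W.eval t = (B.eval t)^p * (D.eval t)^q * evalRT A B C D H t := by
  set q := H.natDegree with hq
  set p := (Finset.range (q+1)).sup (fun j => (H.coeff j).natDegree) with hp
  refine ⟨p, q, ∑ j ∈ Finset.range (q+1),
    (∑ i ∈ Finset.range (p+1), Polynomial.C ((H.coeff j).coeff i) * A^i * B^(p-i))
      * C^j * D^(q-j), ?_⟩
  intro t hB hD
  rw [Polynomial.eval_finset_sum]
  have hRT : evalRT A B C D H t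
      = ∑ j ∈ Finset.range (q+1),
          (H.coeff j).eval (ratFun A B t) * (ratFun C D t)^j := by
    unfold evalRT
    rw [Polynomial.eval₂_eq_sum_range]
    rfl
  rw [hRT, Finset.mul_sum]
  apply Finset.sum_congr rfl
  intro j hj
  have hjle : j ≤ q := by
    simp only [Finset.mem_range] at hj; omega
  have hdeg : (H.coeff j).natDegree < p + 1 := by
    have h5 := Finset.le_sup (f := fun j => (H.coeff j).natDegree) hj
    change (H.coeff j).natDegree ≤ p at h5
    omega
  simp only [Polynomial.eval_mul, Polynomial.eval_pow]
  rw [clear1 A B (H.coeff j) p hdeg t hB]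
  have hC : C.eval t = ratFun C D t * D.eval t := by
    unfold ratFun; field_simp
  rw [hC, mul_pow]
  have hDp : (D.eval t)^j * (D.eval t)^(q-j) = (D.eval t)^q := by
    rw [← pow_add]; congr 1; omega
  rw [← hDp]
  ring

/-- The domain is cofinite, hence infinite -/
lemma domain_infinite {B D : Polynomial ℝ} (hB : B ≠ 0) (hD : D ≠ 0) :
    {t : ℝ | B.eval t ≠ 0 ∧ D.eval t ≠ 0}.Infinite := by
  have hBD : B * D ≠ 0 := mul_ne_zero hB hD
  have hfin : {t : ℝ | (B*D).IsRoot t}.Finite := Polynomial.finite_setOf_isRoot hBD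
  have : {t : ℝ | B.eval t ≠ 0 ∧ D.eval t ≠ 0} = {t : ℝ | (B*D).IsRoot t}ᶜ := by
    ext t
    simp [Polynomial.IsRoot, not_or]
  rw [this]
  exact Set.infinite_of_finite_compl (by simpa using hfin)

/-- if evalRT H vanishes on an infinite subset of the domain, it vanishes on the whole domain -/
lemma van_extend (A B C D : Polynomial ℝ) (hB : B ≠ 0) (hD : D ≠ 0)
    (H : Polynomial (Polynomial ℝ)) (T : Set ℝ) (hT : T.Infinite)
    (hTsub : ∀ t ∈ T, B.eval t ≠ 0 ∧ D.eval t ≠ 0)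
    (hvan : ∀ t ∈ T, evalRT A B C D H t = 0) :
    ∀ t : ℝ, B.eval t ≠ 0 → D.eval t ≠ 0 → evalRT A B C D H t = 0 := by
  obtain ⟨p, q, W, hW⟩ := clear2 A B C D H
  have hW0 : W = 0 := by
    by_contra hne
    apply hT
    apply (Polynomial.finite_setOf_isRoot hne).subset
    intro t ht
    have h1 := hW t (hTsub t ht).1 (hTsub t ht).2
    rw [hvan t ht] at h1
    simp only [Polynomial.IsRoot]
    simpa using h1
  intro t hBt hDt
  have h1 := hW t hBt hDt
  rw [hW0] at h1
  have hpow : (B.eval t)^p * (D.eval t)^q ≠ 0 :=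
    mul_ne_zero (pow_ne_zero _ hBt) (pow_ne_zero _ hDt)
  rw [eq_comm] at h1
  rw [Polynomial.eval_zero] at h1
  rw [mul_assoc] at h1
  rcases mul_eq_zero.mp h1 with h | h
  · exact absurd h (pow_ne_zero _ hBt)
  rcases mul_eq_zero.mp h with h | h
  · exact absurd h (pow_ne_zero _ hDt)
  · exact h

lemma exists_annihilator (A B C D : Polynomial ℝ) :
    ∃ H : Polynomial (Polynomial ℝ), H ≠ 0 ∧
      ∀ t : ℝ, B.eval t ≠ 0 → D.eval t ≠ 0 → evalRT A B C D H t = 0 := by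
  classical
  set E := A.natDegree + B.natDegree + C.natDegree + D.natDegree with hE
  set n := E + 1 with hn
  set m := n * E + 1 with hm
  set v : Fin (n+1) × Fin (n+1) → Polynomial ℝ :=
    fun k => A^(k.1:ℕ) * B^(n-(k.1:ℕ)) * C^(k.2:ℕ) * D^(n-(k.2:ℕ)) with hv
  have hvmem : ∀ k, v k ∈ Polynomial.degreeLT ℝ m := by
    intro k
    rw [Polynomial.mem_degreeLT]
    have h1 : (v k).natDegree ≤ n * E := by
      have l1 : (A^(k.1:ℕ)).natDegree ≤ (k.1:ℕ) * A.natDegree := Polynomial.natDegree_pow_le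
      have l2 : (B^(n-(k.1:ℕ))).natDegree ≤ (n-(k.1:ℕ)) * B.natDegree :=
        Polynomial.natDegree_pow_le
      have l3 : (C^(k.2:ℕ)).natDegree ≤ (k.2:ℕ) * C.natDegree := Polynomial.natDegree_pow_le
      have l4 : (D^(n-(k.2:ℕ))).natDegree ≤ (n-(k.2:ℕ)) * D.natDegree :=
        Polynomial.natDegree_pow_le
      have m1 : (v k).natDegree ≤ (A^(k.1:ℕ) * B^(n-(k.1:ℕ))).natDegree
          + (C^(k.2:ℕ)).natDegree + (D^(n-(k.2:ℕ))).natDegree := by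
        calc (v k).natDegree ≤ (A^(k.1:ℕ) * B^(n-(k.1:ℕ)) * C^(k.2:ℕ)).natDegree
            + (D^(n-(k.2:ℕ))).natDegree := Polynomial.natDegree_mul_le
        _ ≤ (A^(k.1:ℕ) * B^(n-(k.1:ℕ))).natDegree + (C^(k.2:ℕ)).natDegree
            + (D^(n-(k.2:ℕ))).natDegree := by
            have := Polynomial.natDegree_mul_le (p := A^(k.1:ℕ) * B^(n-(k.1:ℕ)))
              (q := C^(k.2:ℕ))
            omega
      have m2 : (A^(k.1:ℕ) * B^(n-(k.1:ℕ))).natDegree ≤ (A^(k.1:ℕ)).natDegree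
          + (B^(n-(k.1:ℕ))).natDegree := Polynomial.natDegree_mul_le
      have hk1 : (k.1:ℕ) ≤ n := by omega
      have hk2 : (k.2:ℕ) ≤ n := by omega
      have : (k.1:ℕ) * A.natDegree + (n-(k.1:ℕ)) * B.natDegree
          + (k.2:ℕ) * C.natDegree + (n-(k.2:ℕ)) * D.natDegree ≤ n * E := by
        have e1 : (k.1:ℕ) * A.natDegree ≤ n * A.natDegree := Nat.mul_le_mul_right _ hk1
        have e2 : (n-(k.1:ℕ)) * B.natDegree ≤ n * B.natDegree :=
          Nat.mul_le_mul_right _ (by omega)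
        have e3 : (k.2:ℕ) * C.natDegree ≤ n * C.natDegree := Nat.mul_le_mul_right _ hk2
        have e4 : (n-(k.2:ℕ)) * D.natDegree ≤ n * D.natDegree :=
          Nat.mul_le_mul_right _ (by omega)
        have : n * E = n * A.natDegree + n * B.natDegree + n * C.natDegree
            + n * D.natDegree := by rw [hE]; ring
        omega
      omega
    calc (v k).degree ≤ (v k).natDegree := Polynomial.degree_le_natDegree
    _ ≤ (n * E : ℕ) := by exact_mod_cast h1
    _ < (m : ℕ) := by exact_mod_cast Nat.lt_succ_self _
  set v' : Fin (n+1) × Fin (n+1) → Polynomial.degreeLT ℝ m := fun k => ⟨v k, hvmem k⟩ with hv'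
  haveI : Module.Finite ℝ (Polynomial.degreeLT ℝ m) :=
    Module.Finite.equiv (Polynomial.degreeLTEquiv ℝ m).symm
  have hcard : Module.finrank ℝ (Polynomial.degreeLT ℝ m) < Fintype.card (Fin (n+1) × Fin (n+1)) := by
    have h1 : Module.finrank ℝ (Polynomial.degreeLT ℝ m) = m := by
      rw [LinearEquiv.finrank_eq (Polynomial.degreeLTEquiv ℝ m)]
      simp
    rw [h1]
    simp only [Fintype.card_prod, Fintype.card_fin]
    have : m = n * E + 1 := rfl
    nlinarith [this]
  have hnli : ¬ LinearIndependent ℝ v' := by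
    intro hli
    have := hli.fintype_card_le_finrank
    omega
  rw [Fintype.not_linearIndependent_iff] at hnli
  obtain ⟨g, hgsum, i₀, hgne⟩ := hnli
  have hsum0 : ∑ k : Fin (n+1) × Fin (n+1), g k • v k = 0 := by
    have h6 := congrArg (Subtype.val) hgsum
    rw [Submodule.coe_sum] at h6
    simp only [SetLike.val_smul, hv'] at h6
    simpa using h6
  set H : Polynomial (Polynomial ℝ) := ∑ k : Fin (n+1) × Fin (n+1),
    Polynomial.C (Polynomial.C (g k) * Polynomial.X ^ (k.1:ℕ)) * Polynomial.X ^ (k.2:ℕ) with hH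
  have hcoeff : ∀ k : Fin (n+1) × Fin (n+1), (H.coeff (k.2:ℕ)).coeff (k.1:ℕ) = g k := by
    intro k₀
    rw [hH, Polynomial.finset_sum_coeff]
    have : ∀ k : Fin (n+1) × Fin (n+1),
        ((Polynomial.C (Polynomial.C (g k) * Polynomial.X ^ (k.1:ℕ))
          * Polynomial.X ^ (k.2:ℕ)).coeff (k₀.2:ℕ)).coeff (k₀.1:ℕ)
        = if k = k₀ then g k else 0 := by
      intro k
      rw [Polynomial.coeff_C_mul_X_pow]
      by_cases h2 : (k₀.2:ℕ) = (k.2:ℕ)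
      · rw [if_pos h2]
        rw [Polynomial.coeff_C_mul, Polynomial.coeff_X_pow]
        by_cases h1 : (k₀.1:ℕ) = (k.1:ℕ)
        · rw [if_pos h1]
          have : k = k₀ := by
            apply Prod.ext
            · exact Fin.ext h1.symm
            · exact Fin.ext h2.symm
          rw [if_pos this]
          ring
        · rw [if_neg h1]
          have : ¬ (k = k₀) := by
            intro hc; exact h1 (by rw [hc])
          rw [if_neg this]
          ring
      · rw [if_neg h2]
        have : ¬ (k = k₀) := by
          intro hc; exact h2 (by rw [hc])
        rw [if_neg this]
        simp
    rw [Polynomial.finset_sum_coeff]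
    rw [Finset.sum_congr rfl (fun k _ => this k)]
    simp
  refine ⟨H, ?_, ?_⟩
  · intro h0
    apply hgne
    rw [← hcoeff i₀, h0]
    simp
  · intro t hBt hDt
    have heval : Polynomial.eval t (∑ k : Fin (n+1) × Fin (n+1), g k • v k) = 0 := by
      rw [hsum0]; simp
    rw [Polynomial.eval_finset_sum] at heval
    have hA : A.eval t = ratFun A B t * B.eval t := by unfold ratFun; field_simp
    have hC : C.eval t = ratFun C D t * D.eval t := by unfold ratFun; field_simp
    have hterm : ∀ k : Fin (n+1) × Fin (n+1),
        Polynomial.eval t (g k • v k)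
          = (B.eval t)^n * (D.eval t)^n
            * (g k * (ratFun A B t)^(k.1:ℕ) * (ratFun C D t)^(k.2:ℕ)) := by
      intro k
      have hk1 : (k.1:ℕ) ≤ n := by omega
      have hk2 : (k.2:ℕ) ≤ n := by omega
      simp only [Polynomial.eval_smul, hv, Polynomial.eval_mul, Polynomial.eval_pow, smul_eq_mul]
      rw [hA, hC, mul_pow, mul_pow]
      have e1 : (B.eval t)^(k.1:ℕ) * (B.eval t)^(n-(k.1:ℕ)) = (B.eval t)^n := by
        rw [← pow_add]; congr 1; omega
      have e2 : (D.eval t)^(k.2:ℕ) * (D.eval t)^(n-(k.2:ℕ)) = (D.eval t)^n := by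
        rw [← pow_add]; congr 1; omega
      rw [← e1, ← e2]
      ring
    rw [Finset.sum_congr rfl (fun k _ => hterm k), ← Finset.mul_sum] at heval
    have hBDn : (B.eval t)^n * (D.eval t)^n ≠ 0 :=
      mul_ne_zero (pow_ne_zero _ hBt) (pow_ne_zero _ hDt)
    have hsum2 : ∑ k : Fin (n+1) × Fin (n+1),
        g k * (ratFun A B t)^(k.1:ℕ) * (ratFun C D t)^(k.2:ℕ) = 0 := by
      rcases mul_eq_zero.mp heval with h | h
      · exact absurd h hBDn
      · exact h
    unfold evalRT
    rw [hH, Polynomial.eval₂_finset_sum]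
    rw [← hsum2]
    apply Finset.sum_congr rfl
    intro k _
    rw [Polynomial.eval₂_mul, Polynomial.eval₂_C, Polynomial.eval₂_X_pow]
    simp only [Polynomial.coe_evalRingHom, Polynomial.eval_mul, Polynomial.eval_C,
      Polynomial.eval_pow, Polynomial.eval_X]

section Tau

/-- coefficient-wise substitution x ↦ ε x -/
def scaleHom (ε : ℝ) : Polynomial ℝ →+* Polynomial ℝ :=
  Polynomial.eval₂RingHom Polynomial.C (Polynomial.C ε * Polynomial.X)

lemma scaleHom_apply (ε : ℝ) (h : Polynomial ℝ) :
    scaleHom ε h = h.comp (Polynomial.C ε * Polynomial.X) := rfl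

lemma scaleHom_C (ε c : ℝ) : scaleHom ε (Polynomial.C c) = Polynomial.C c := by
  rw [scaleHom_apply, Polynomial.C_comp]

lemma scaleHom_scaleHom {ε : ℝ} (hε : ε * ε = 1) (h : Polynomial ℝ) :
    scaleHom ε (scaleHom ε h) = h := by
  rw [scaleHom_apply, scaleHom_apply, Polynomial.comp_assoc]
  have : (Polynomial.C ε * Polynomial.X).comp (Polynomial.C ε * Polynomial.X) = Polynomial.X := by
    rw [Polynomial.mul_comp, Polynomial.C_comp, Polynomial.X_comp]
    rw [← mul_assoc, ← Polynomial.C_mul, hε]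
    simp
  rw [this, Polynomial.comp_X]

lemma scaleHom_eval (ε x : ℝ) (h : Polynomial ℝ) :
    (scaleHom ε h).eval x = h.eval (ε * x) := by
  rw [scaleHom_apply, Polynomial.eval_comp]
  simp

/-- the substitution (x, y) ↦ (ε x, y - δ) -/
def tauOp (ε δ : ℝ) (H : Polynomial (Polynomial ℝ)) : Polynomial (Polynomial ℝ) :=
  (Polynomial.taylor (Polynomial.C (-δ)) H).map (scaleHom ε)

lemma tauOp_eval (ε δ x y : ℝ) (H : Polynomial (Polynomial ℝ)) :
    Polynomial.eval₂ (Polynomial.evalRingHom x) y (tauOp ε δ H)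
      = Polynomial.eval₂ (Polynomial.evalRingHom (ε * x)) (y - δ) H := by
  unfold tauOp
  rw [Polynomial.eval₂_map]
  have hhom : (Polynomial.evalRingHom x).comp (scaleHom ε)
      = Polynomial.evalRingHom (ε * x) := by
    apply RingHom.ext
    intro h
    simp only [RingHom.comp_apply, Polynomial.coe_evalRingHom]
    exact scaleHom_eval ε x h
  rw [hhom, Polynomial.taylor_apply, Polynomial.eval₂_comp]
  congr 1
  simp only [Polynomial.eval₂_add, Polynomial.eval₂_X, Polynomial.eval₂_C,
    Polynomial.coe_evalRingHom, Polynomial.eval_C]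
  ring

lemma taylor_map_comm (ε : ℝ) (c : ℝ) (K : Polynomial (Polynomial ℝ)) :
    (Polynomial.taylor (Polynomial.C c) K).map (scaleHom ε)
      = Polynomial.taylor (Polynomial.C c) (K.map (scaleHom ε)) := by
  rw [Polynomial.taylor_apply, Polynomial.taylor_apply, Polynomial.map_comp]
  congr 1
  simp [scaleHom_C]

lemma tauOp_tauOp {ε : ℝ} (hε : ε * ε = 1) (δ : ℝ) (H : Polynomial (Polynomial ℝ)) :
    tauOp ε δ (tauOp ε δ H) = Polynomial.taylor (Polynomial.C (-(2*δ))) H := by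
  unfold tauOp
  have h1 : (scaleHom ε).comp (scaleHom ε) = RingHom.id (Polynomial ℝ) :=
    RingHom.ext (fun h => scaleHom_scaleHom hε h)
  rw [taylor_map_comm, Polynomial.map_map, h1, Polynomial.map_id, Polynomial.taylor_taylor]
  congr 2
  rw [← Polynomial.C_add]
  congr 1
  ring

lemma map_scaleHom_involutive {ε : ℝ} (hε : ε * ε = 1) (K : Polynomial (Polynomial ℝ)) :
    (K.map (scaleHom ε)).map (scaleHom ε) = K := by
  rw [Polynomial.map_map]
  have h1 : (scaleHom ε).comp (scaleHom ε) = RingHom.id (Polynomial ℝ) :=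
    RingHom.ext (fun h => scaleHom_scaleHom hε h)
  rw [h1, Polynomial.map_id]

lemma tauOp_ne_zero {ε : ℝ} (hε : ε * ε = 1) (δ : ℝ) {H : Polynomial (Polynomial ℝ)}
    (hH : H ≠ 0) : tauOp ε δ H ≠ 0 := by
  unfold tauOp
  intro h0
  apply hH
  have h1 : Polynomial.taylor (Polynomial.C (-δ)) H = 0 := by
    have := congrArg (fun K => K.map (scaleHom ε)) h0
    simpa [map_scaleHom_involutive hε] using this
  exact Polynomial.taylor_injective (r := Polynomial.C (-δ)) (by simpa using h1)

lemma tauOp_natDegree {ε : ℝ} (hε : ε * ε = 1) (δ : ℝ) (H : Polynomial (Polynomial ℝ)) :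
    (tauOp ε δ H).natDegree = H.natDegree := by
  unfold tauOp
  rw [← Polynomial.natDegree_taylor H (Polynomial.C (-δ))]
  set K := Polynomial.taylor (Polynomial.C (-δ)) H
  apply le_antisymm Polynomial.natDegree_map_le
  conv_lhs => rw [← map_scaleHom_involutive hε K]
  exact Polynomial.natDegree_map_le

end Tau

/-- THE MAIN FINITENESS LEMMA: for δ ≠ 0, the relation r(t) = ε r(s), θ(t) = θ(s) + δ
has only finitely many solutions in the domain. -/
lemma rel_set_finite (A B C D : Polynomial ℝ) (hB : B ≠ 0) (hD : D ≠ 0)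
    (hAB : IsCoprime A B) (hCD : IsCoprime C D)
    (hr : ¬ (A.natDegree = 0 ∧ B.natDegree = 0))
    (hθ : ¬ (C.natDegree = 0 ∧ D.natDegree = 0))
    (ε δ : ℝ) (hε : ε * ε = 1) (hδ : δ ≠ 0) :
    {p : ℝ × ℝ | (B.eval p.1 ≠ 0 ∧ D.eval p.1 ≠ 0) ∧ (B.eval p.2 ≠ 0 ∧ D.eval p.2 ≠ 0) ∧
      ratFun A B p.1 = ε * ratFun A B p.2 ∧
      ratFun C D p.1 = ratFun C D p.2 + δ}.Finite := by
  classical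
  by_contra hinf
  replace hinf : {p : ℝ × ℝ | (B.eval p.1 ≠ 0 ∧ D.eval p.1 ≠ 0) ∧ (B.eval p.2 ≠ 0 ∧ D.eval p.2 ≠ 0) ∧
      ratFun A B p.1 = ε * ratFun A B p.2 ∧
      ratFun C D p.1 = ratFun C D p.2 + δ}.Infinite := hinf
  set S := {p : ℝ × ℝ | (B.eval p.1 ≠ 0 ∧ D.eval p.1 ≠ 0) ∧ (B.eval p.2 ≠ 0 ∧ D.eval p.2 ≠ 0) ∧
      ratFun A B p.1 = ε * ratFun A B p.2 ∧
      ratFun C D p.1 = ratFun C D p.2 + δ} with hS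
  -- the set of t-values is infinite
  have hT : (Prod.fst '' S).Infinite := by
    apply infinite_image_of_fibers _ hinf
    intro t₀
    have hL : {s : ℝ | D.eval s ≠ 0 ∧ ratFun C D s = ratFun C D t₀ - δ}.Finite :=
      ratFun_level_finite hCD hθ _
    apply ((Set.finite_singleton t₀).prod hL).subset
    rintro ⟨t, s⟩ ⟨hmem, hfst⟩
    simp only [Set.mem_preimage, Set.mem_singleton_iff] at hfst
    obtain ⟨h1, h2, h3, h4⟩ := hmem
    refine ⟨hfst, h2.2, ?_⟩
    simp only [Set.mem_setOf_eq]
    rw [← hfst]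
    linarith [h4]
  -- the vanishing predicate
  set VanP : Polynomial (Polynomial ℝ) → Prop :=
    fun H => ∀ u : ℝ, B.eval u ≠ 0 → D.eval u ≠ 0 → evalRT A B C D H u = 0 with hVanP
  -- closure under tau
  have hclosure : ∀ H, VanP H → VanP (tauOp ε δ H) := by
    intro H hvH
    apply van_extend A B C D hB hD _ _ hT
    · rintro t ⟨⟨t', s⟩, hmem, rfl⟩
      exact hmem.1
    · rintro t ⟨⟨t', s⟩, hmem, rfl⟩
      obtain ⟨h1, h2, h3, h4⟩ := hmem
      unfold evalRT
      rw [tauOp_eval]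
      have e1 : ε * ratFun A B t' = ratFun A B s := by
        rw [h3, ← mul_assoc, hε, one_mul]
      have e2 : ratFun C D t' - δ = ratFun C D s := by linarith [h4]
      rw [e1, e2]
      exact hvH s h2.1 h2.2
  -- existence of a nonzero annihilating polynomial
  obtain ⟨H₁, hH₁ne, hH₁van⟩ := exists_annihilator A B C D
  set N := {n : ℕ | ∃ H : Polynomial (Polynomial ℝ), H ≠ 0 ∧ VanP H ∧ H.natDegree = n} with hN
  have hNne : N.Nonempty := ⟨H₁.natDegree, H₁, hH₁ne, hH₁van, rfl⟩
  set e := sInf N with he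
  obtain ⟨H, hHne, hHvan, hHdeg⟩ := Nat.sInf_mem hNne
  rw [← he] at hHdeg
  by_cases he0 : e = 0
  · -- minimal degree zero: r is algebraic over ℝ, contradiction
    rw [he0] at hHdeg
    set h := H.coeff 0 with hh
    have hHC : H = Polynomial.C h := Polynomial.eq_C_of_natDegree_eq_zero hHdeg
    have hne : h ≠ 0 := by
      intro h0
      apply hHne
      rw [hHC, h0, Polynomial.C_0]
    have hvan : ∀ u : ℝ, B.eval u ≠ 0 → D.eval u ≠ 0 → h.eval (ratFun A B u) = 0 := by
      intro u hBu hDu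
      have := hHvan u hBu hDu
      unfold evalRT at this
      rw [hHC, Polynomial.eval₂_C] at this
      simpa using this
    set p := h.natDegree with hp
    set W₁ := ∑ i ∈ Finset.range (p+1), Polynomial.C (h.coeff i) * A^i * B^(p-i) with hW₁
    have hW₁0 : W₁ = 0 := by
      by_contra hne'
      apply domain_infinite hB hD
      apply (Polynomial.finite_setOf_isRoot hne').subset
      rintro u ⟨hBu, hDu⟩
      have hcl := clear1 A B h p (Nat.lt_succ_self p) u hBu
      rw [← hW₁] at hcl
      show Polynomial.eval u W₁ = 0
      rw [hcl, hvan u hBu hDu]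
      ring
    have hBdeg : B.natDegree = 0 := by
      have hsplit : W₁ = Polynomial.C (h.coeff p) * A^p
          + B * (∑ i ∈ Finset.range p, Polynomial.C (h.coeff i) * A^i * B^(p-1-i)) := by
        rw [hW₁, Finset.sum_range_succ]
        simp only [Nat.sub_self, pow_zero, mul_one]
        rw [add_comm]
        congr 1
        rw [Finset.mul_sum]
        apply Finset.sum_congr rfl
        intro i hi
        have hip : i < p := Finset.mem_range.mp hi
        have : B^(p-i) = B * B^(p-1-i) := by
          rw [← pow_succ']
          congr 1
          omega
        rw [this]
        ring
      have hdvd : B ∣ Polynomial.C (h.coeff p) * A^p := by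
        refine ⟨-(∑ i ∈ Finset.range p, Polynomial.C (h.coeff i) * A^i * B^(p-1-i)), ?_⟩
        have := hsplit
        rw [hW₁0] at this
        linear_combination -this
      have hcop : IsCoprime B (A^p) := (hAB.symm).pow_right
      have hdvdC : B ∣ Polynomial.C (h.coeff p) := hcop.dvd_of_dvd_mul_right hdvd
      have hCp : Polynomial.C (h.coeff p) ≠ 0 := by
        simp only [ne_eq, Polynomial.C_eq_zero]
        rw [hp]
        exact Polynomial.leadingCoeff_ne_zero.mpr hne
      have := Polynomial.natDegree_le_of_dvd hdvdC hCp
      simpa using this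
    set b := B.coeff 0 with hb
    have hBC : B = Polynomial.C b := Polynomial.eq_C_of_natDegree_eq_zero hBdeg
    have hbne : b ≠ 0 := by
      intro h0
      apply hB
      rw [hBC, h0, Polynomial.C_0]
    have hcomp0 : h.comp (Polynomial.C b⁻¹ * A) = 0 := by
      by_contra hne'
      apply domain_infinite hB hD
      apply (Polynomial.finite_setOf_isRoot hne').subset
      rintro u ⟨hBu, hDu⟩
      have hru : ratFun A B u = b⁻¹ * A.eval u := by
        unfold ratFun
        rw [hBC]
        simp only [Polynomial.eval_C]
        field_simp
      show Polynomial.eval u (h.comp (Polynomial.C b⁻¹ * A)) = 0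
      rw [Polynomial.eval_comp, Polynomial.eval_mul, Polynomial.eval_C, ← hru]
      exact hvan u hBu hDu
    rcases Polynomial.comp_eq_zero_iff.mp hcomp0 with h0 | ⟨_, hconst⟩
    · exact hne h0
    · apply hr
      constructor
      · have hA : A = Polynomial.C (b * (Polynomial.C b⁻¹ * A).coeff 0) := by
          have h5 : Polynomial.C b * (Polynomial.C b⁻¹ * A)
              = Polynomial.C b * Polynomial.C ((Polynomial.C b⁻¹ * A).coeff 0) := by
            rw [← hconst]
          rw [← mul_assoc, ← Polynomial.C_mul, mul_inv_cancel₀ hbne, Polynomial.C_1,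
            one_mul, ← Polynomial.C_mul] at h5
          exact h5
        rw [hA]
        exact Polynomial.natDegree_C _
      · exact hBdeg
  · -- minimal degree e ≥ 1: shift-invariance kills the top coefficient
    have he1 : 1 ≤ e := Nat.one_le_iff_ne_zero.mpr he0
    set f := e - 1 with hf
    have hef : e = f + 1 := by omega
    set γ : ℝ := -(2*δ) with hγ
    have hγne : γ ≠ 0 := by
      rw [hγ]
      intro h0
      apply hδ
      linarith [h0]
    set G := tauOp ε δ (tauOp ε δ H) with hG
    have hGtaylor : G = Polynomial.taylor (Polynomial.C γ) H := by
      rw [hG, tauOp_tauOp hε, hγ]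
    have hGvan : VanP G := hclosure _ (hclosure _ hHvan)
    have hGdeg : G.natDegree = e := by
      rw [hG, tauOp_natDegree hε, tauOp_natDegree hε, hHdeg]
    have hHe : H.coeff e ≠ 0 := by
      rw [← hHdeg]
      exact Polynomial.leadingCoeff_ne_zero.mpr hHne
    -- coefficient computations
    have hcoeff_e : G.coeff e = H.coeff e := by
      rw [hGtaylor, Polynomial.taylor_coeff]
      have hdle : (Polynomial.hasseDeriv e H).natDegree = 0 := by
        have := Polynomial.natDegree_hasseDeriv_le H e
        rw [hHdeg] at this
        omega
      rw [Polynomial.eq_C_of_natDegree_eq_zero hdle]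
      rw [Polynomial.eval_C, Polynomial.hasseDeriv_coeff]
      simp
    have hcoeff_f : G.coeff f = H.coeff f + (e : Polynomial ℝ) * H.coeff e * Polynomial.C γ := by
      rw [hGtaylor, Polynomial.taylor_coeff]
      have hdle : (Polynomial.hasseDeriv f H).natDegree < 2 := by
        have := Polynomial.natDegree_hasseDeriv_le H f
        rw [hHdeg] at this
        omega
      rw [Polynomial.eval_eq_sum_range' hdle]
      rw [Finset.sum_range_succ, Finset.sum_range_succ]
      simp only [Finset.sum_range_zero, zero_add, pow_zero, mul_one, pow_one]
      rw [Polynomial.hasseDeriv_coeff, Polynomial.hasseDeriv_coeff]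
      have h1 : (0 + f).choose f = 1 := by simp
      have h2 : (1 + f).choose f = e := by
        rw [add_comm]
        rw [← hef]
        have : e.choose f = e.choose (e - f) := (Nat.choose_symm (by omega)).symm
        rw [this]
        have : e - f = 1 := by omega
        rw [this, Nat.choose_one_right]
      rw [h1, h2]
      have h3 : 0 + f = f := by omega
      have h4 : 1 + f = e := by omega
      rw [h3, h4]
      push_cast
      ring
    set K := G - H with hK
    have hKvan : VanP K := by
      intro u hBu hDu
      unfold evalRT
      rw [hK, Polynomial.eval₂_sub]
      have g1 := hGvan u hBu hDu
      have g2 := hHvan u hBu hDu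
      unfold evalRT at g1 g2
      rw [g1, g2]
      ring
    have hKf : K.coeff f = (e : Polynomial ℝ) * H.coeff e * Polynomial.C γ := by
      rw [hK, Polynomial.coeff_sub, hcoeff_f]
      ring
    have hKne : K ≠ 0 := by
      intro h0
      have : K.coeff f = 0 := by rw [h0]; simp
      rw [hKf] at this
      rcases mul_eq_zero.mp this with h' | h'
      · rcases mul_eq_zero.mp h' with h'' | h''
        · have : (e : ℝ) = 0 := by
            have := congrArg (Polynomial.eval 0) h''
            simpa using this
          have : e = 0 := by exact_mod_cast this
          omega
        · exact hHe h''
      · rw [Polynomial.C_eq_zero] at h'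
        exact hγne h'
    have hKdeg : K.natDegree < e := by
      have hle : K.natDegree ≤ e := by
        have := Polynomial.natDegree_sub_le G H
        rw [hGdeg, hHdeg] at this
        simpa using this
      rcases lt_or_eq_of_le hle with h' | h'
      · exact h'
      · exfalso
        apply hKne
        have : K.coeff e = 0 := by
          rw [hK, Polynomial.coeff_sub, hcoeff_e]
          ring
        have hlc : K.leadingCoeff = 0 := by
          rw [Polynomial.leadingCoeff, h', this]
        exact Polynomial.leadingCoeff_eq_zero.mp hlc
    have : sInf N ≤ K.natDegree := Nat.sInf_le ⟨K, hKne, hKvan, rfl⟩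
    rw [← he] at this
    omega

lemma cos_sin_eq_iff {x y : ℝ} (hc : Real.cos x = Real.cos y) (hs : Real.sin x = Real.sin y) :
    ∃ k : ℤ, x = y + 2 * (k:ℝ) * Real.pi := by
  have : (x : Real.Angle) = (y : Real.Angle) := Real.Angle.cos_sin_inj hc hs
  rw [Real.Angle.angle_eq_iff_two_pi_dvd_sub] at this
  obtain ⟨k, hk⟩ := this
  exact ⟨k, by linarith [hk]⟩

/-- the system relation for a given k -/
def sysRel (A B C D : Polynomial ℝ) (k : ℤ) (t s : ℝ) : Prop :=
  (ratFun A B t = ratFun A B s ∧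
      ratFun C D t = ratFun C D s + 2 * (k : ℝ) * Real.pi) ∨
   (ratFun A B t = -(ratFun A B s) ∧
      ratFun C D t = ratFun C D s + (2 * (k : ℝ) + 1) * Real.pi)

lemma sysRel_forward {A B C D : Polynomial ℝ} {k : ℤ} {t s : ℝ}
    (h : sysRel A B C D k t s) : polarCurve A B C D t = polarCurve A B C D s := by
  rcases h with ⟨h1, h2⟩ | ⟨h1, h2⟩
  · unfold polarCurve
    rw [h1, h2]
    have hc : Real.cos (ratFun C D s + 2 * (k:ℝ) * Real.pi) = Real.cos (ratFun C D s) := by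
      have := Real.cos_add_int_mul_two_pi (ratFun C D s) k; rw [← this]; ring_nf
    have hs : Real.sin (ratFun C D s + 2 * (k:ℝ) * Real.pi) = Real.sin (ratFun C D s) := by
      have := Real.sin_add_int_mul_two_pi (ratFun C D s) k; rw [← this]; ring_nf
    rw [hc, hs]
  · unfold polarCurve
    rw [h1, h2]
    have hc : Real.cos (ratFun C D s + (2 * (k:ℝ) + 1) * Real.pi) = -Real.cos (ratFun C D s) := by
      have h' : ratFun C D s + (2 * (k:ℝ) + 1) * Real.pi
          = (ratFun C D s + Real.pi) + (k:ℝ) * (2 * Real.pi) := by ring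
      rw [h', Real.cos_add_int_mul_two_pi, Real.cos_add_pi]
    have hs : Real.sin (ratFun C D s + (2 * (k:ℝ) + 1) * Real.pi) = -Real.sin (ratFun C D s) := by
      have h' : ratFun C D s + (2 * (k:ℝ) + 1) * Real.pi
          = (ratFun C D s + Real.pi) + (k:ℝ) * (2 * Real.pi) := by ring
      rw [h', Real.sin_add_int_mul_two_pi, Real.sin_add_pi]
    rw [hc, hs]
    refine Prod.ext ?_ ?_ <;> simp <;> ring

lemma sysRel_backward {A B C D : Polynomial ℝ} {t s : ℝ}
    (h : polarCurve A B C D t = polarCurve A B C D s) (hrt : ratFun A B t ≠ 0) :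
    ∃ k : ℤ, sysRel A B C D k t s := by
  set r1 := ratFun A B t with hr1
  set r2 := ratFun A B s with hr2
  set θ1 := ratFun C D t with hθ1
  set θ2 := ratFun C D s with hθ2
  have h1 : r1 * Real.cos θ1 = r2 * Real.cos θ2 := congrArg Prod.fst h
  have h2 : r1 * Real.sin θ1 = r2 * Real.sin θ2 := congrArg Prod.snd h
  have hsq : r1^2 = r2^2 := by
    have e1 : r1^2 = (r1 * Real.cos θ1)^2 + (r1 * Real.sin θ1)^2 := by
      have := Real.sin_sq_add_cos_sq θ1
      ring_nf
      nlinarith [this]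
    have e2 : r2^2 = (r2 * Real.cos θ2)^2 + (r2 * Real.sin θ2)^2 := by
      have := Real.sin_sq_add_cos_sq θ2
      ring_nf
      nlinarith [this]
    rw [e1, e2, h1, h2]
  have hr2ne : r2 ≠ 0 := by
    intro h0
    rw [h0] at hsq
    simp at hsq
    exact hrt hsq
  have hcase : r1 = r2 ∨ r1 = -r2 := by
    have : (r1 - r2) * (r1 + r2) = 0 := by nlinarith [hsq]
    rcases mul_eq_zero.mp this with h' | h'
    · left; linarith
    · right; linarith
  rcases hcase with hc | hc
  · have hcc : Real.cos θ1 = Real.cos θ2 := by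
      rw [hc] at h1
      exact mul_left_cancel₀ hr2ne h1
    have hss : Real.sin θ1 = Real.sin θ2 := by
      rw [hc] at h2
      exact mul_left_cancel₀ hr2ne h2
    obtain ⟨k, hk⟩ := cos_sin_eq_iff hcc hss
    exact ⟨k, Or.inl ⟨hc, hk⟩⟩
  · have hcc : Real.cos θ1 = Real.cos (θ2 + Real.pi) := by
      rw [Real.cos_add_pi]
      rw [hc] at h1
      have : -(r2 * Real.cos θ1) = r2 * Real.cos θ2 := by linarith [h1]
      have h3 : r2 * Real.cos θ1 = r2 * (-Real.cos θ2) := by linarith [this]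
      have := mul_left_cancel₀ hr2ne h3
      linarith [this]
    have hss : Real.sin θ1 = Real.sin (θ2 + Real.pi) := by
      rw [Real.sin_add_pi]
      rw [hc] at h2
      have : -(r2 * Real.sin θ1) = r2 * Real.sin θ2 := by linarith [h2]
      have h3 : r2 * Real.sin θ1 = r2 * (-Real.sin θ2) := by linarith [this]
      have := mul_left_cancel₀ hr2ne h3
      linarith [this]
    obtain ⟨k, hk⟩ := cos_sin_eq_iff hcc hss
    refine ⟨k, Or.inr ⟨hc, ?_⟩⟩
    show θ1 = θ2 + (2 * (k:ℝ) + 1) * Real.pi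
    rw [hk]; ring


lemma sysRel_k_unique {A B C D : Polynomial ℝ} {k k' : ℤ} {t s : ℝ}
    (h : sysRel A B C D k t s) (h' : sysRel A B C D k' t s) : k = k' := by
  have hπ := Real.pi_ne_zero
  have key : ∀ a b : ℝ, a * Real.pi = b * Real.pi → a = b := fun a b hab =>
    mul_right_cancel₀ hπ hab
  rcases h with ⟨_, h2⟩ | ⟨_, h2⟩ <;> rcases h' with ⟨_, h2'⟩ | ⟨_, h2'⟩
  · have : (2 * (k:ℝ)) * Real.pi = (2 * (k':ℝ)) * Real.pi := by linarith [h2, h2']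
    have h3 := key _ _ this
    have : (k:ℝ) = (k':ℝ) := by linarith [h3]
    exact_mod_cast this
  · exfalso
    have : (2 * (k:ℝ)) * Real.pi = (2 * (k':ℝ) + 1) * Real.pi := by linarith [h2, h2']
    have h3 := key _ _ this
    have h4 : ((2 * k : ℤ) : ℝ) = ((2 * k' + 1 : ℤ) : ℝ) := by push_cast; linarith [h3]
    have h5 : (2 * k : ℤ) = 2 * k' + 1 := by exact_mod_cast h4
    omega
  · exfalso
    have : (2 * (k:ℝ) + 1) * Real.pi = (2 * (k':ℝ)) * Real.pi := by linarith [h2, h2']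
    have h3 := key _ _ this
    have h4 : ((2 * k + 1 : ℤ) : ℝ) = ((2 * k' : ℤ) : ℝ) := by push_cast; linarith [h3]
    have h5 : (2 * k + 1 : ℤ) = 2 * k' := by exact_mod_cast h4
    omega
  · have : (2 * (k:ℝ) + 1) * Real.pi = (2 * (k':ℝ) + 1) * Real.pi := by linarith [h2, h2']
    have h3 := key _ _ this
    have : (k:ℝ) = (k':ℝ) := by linarith [h3]
    exact_mod_cast this

/-- the solution set of the system for a fixed k -/
def sysSetP (A B C D : Polynomial ℝ) (k : ℤ) : Set (ℝ × ℝ) :=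
  {p : ℝ × ℝ | p.1 ∈ polarDomain B D ∧ p.2 ∈ polarDomain B D ∧ p.1 ≠ p.2 ∧
    sysRel A B C D k p.1 p.2}

/-- finiteness of the k = 0, first-system case; this is where properness is used -/
lemma proper_rel_finite (A B C D : Polynomial ℝ)
    (hAB : IsCoprime A B) (hCD : IsCoprime C D)
    (hr : ¬ (A.natDegree = 0 ∧ B.natDegree = 0))
    (hθ : ¬ (C.natDegree = 0 ∧ D.natDegree = 0))
    (hproper : IsProperPolar A B C D) :
    {p : ℝ × ℝ | p.1 ∈ polarDomain B D ∧ p.2 ∈ polarDomain B D ∧ p.1 ≠ p.2 ∧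
      ratFun A B p.1 = ratFun A B p.2 ∧ ratFun C D p.1 = ratFun C D p.2}.Finite := by
  classical
  obtain ⟨F, hFfin, hFprop⟩ := hproper
  by_contra hinf
  replace hinf : {p : ℝ × ℝ | p.1 ∈ polarDomain B D ∧ p.2 ∈ polarDomain B D ∧ p.1 ≠ p.2 ∧
      ratFun A B p.1 = ratFun A B p.2 ∧ ratFun C D p.1 = ratFun C D p.2}.Infinite := hinf
  set S := {p : ℝ × ℝ | p.1 ∈ polarDomain B D ∧ p.2 ∈ polarDomain B D ∧ p.1 ≠ p.2 ∧
      ratFun A B p.1 = ratFun A B p.2 ∧ ratFun C D p.1 = ratFun C D p.2} with hS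
  have hT : (Prod.fst '' S).Infinite := by
    apply infinite_image_of_fibers _ hinf
    intro t₀
    have hL : {u : ℝ | D.eval u ≠ 0 ∧ ratFun C D u = ratFun C D t₀}.Finite :=
      ratFun_level_finite hCD hθ _
    apply ((Set.finite_singleton t₀).prod hL).subset
    rintro ⟨t, u⟩ ⟨hmem, hfst⟩
    simp only [Set.mem_preimage, Set.mem_singleton_iff] at hfst
    obtain ⟨h1, h2, h3, h4, h5⟩ := hmem
    refine ⟨hfst, h2.2, ?_⟩
    simp only [Set.mem_setOf_eq]
    rw [← hfst]
    exact h5.symm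
  have hT' : ((Prod.fst '' S) \ F).Infinite := hT.diff hFfin
  apply hT'
  have hsub : (Prod.fst '' S) \ F ⊆ ⋃ s₀ ∈ F, {t : ℝ | B.eval t ≠ 0 ∧
      ratFun A B t = ratFun A B s₀} := by
    rintro t ⟨⟨⟨t', u⟩, hmem, hfst⟩, htF⟩
    obtain ⟨h1, h2, h3, h4, h5⟩ := hmem
    simp only at hfst
    subst hfst
    have huF : u ∈ F := by
      by_contra huF
      exact h3 (hFprop t' u h1 h2 htF huF h4 h5)
    simp only [Set.mem_iUnion]
    exact ⟨u, huF, h1.1, h4⟩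
  exact (hFfin.biUnion (fun s₀ _ => ratFun_level_finite hAB hr _)).subset hsub

lemma sysSetP_finite (A B C D : Polynomial ℝ) (hB : B ≠ 0) (hD : D ≠ 0)
    (hAB : IsCoprime A B) (hCD : IsCoprime C D)
    (hr : ¬ (A.natDegree = 0 ∧ B.natDegree = 0))
    (hθ : ¬ (C.natDegree = 0 ∧ D.natDegree = 0))
    (hproper : IsProperPolar A B C D) (k : ℤ) :
    (sysSetP A B C D k).Finite := by
  have hπ := Real.pi_ne_zero
  -- second-system part is always finite
  have h2 : {p : ℝ × ℝ | (B.eval p.1 ≠ 0 ∧ D.eval p.1 ≠ 0) ∧ (B.eval p.2 ≠ 0 ∧ D.eval p.2 ≠ 0) ∧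
      ratFun A B p.1 = (-1 : ℝ) * ratFun A B p.2 ∧
      ratFun C D p.1 = ratFun C D p.2 + (2 * (k:ℝ) + 1) * Real.pi}.Finite := by
    apply rel_set_finite A B C D hB hD hAB hCD hr hθ (-1) ((2 * (k:ℝ) + 1) * Real.pi)
      (by norm_num)
    apply mul_ne_zero _ hπ
    intro h0
    have h3 : ((2 * k + 1 : ℤ) : ℝ) = 0 := by push_cast; linarith [h0]
    have h4 : (2 * k + 1 : ℤ) = 0 := by exact_mod_cast h3
    omega
  rcases eq_or_ne k 0 with hk0 | hkne
  · -- k = 0 : use properness for the first system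
    subst hk0
    have h1 := proper_rel_finite A B C D hAB hCD hr hθ hproper
    apply (h1.union h2).subset
    rintro ⟨t, s⟩ ⟨hd1, hd2, hne, hsys⟩
    rcases hsys with ⟨ha, hb⟩ | ⟨ha, hb⟩
    · left
      refine ⟨hd1, hd2, hne, ha, ?_⟩
      rw [hb]
      push_cast
      ring
    · right
      refine ⟨hd1, hd2, ?_, ?_⟩
      · rw [ha]; ring
      · exact hb
  · -- k ≠ 0 : both systems via the main lemma
    have h1 : {p : ℝ × ℝ | (B.eval p.1 ≠ 0 ∧ D.eval p.1 ≠ 0) ∧ (B.eval p.2 ≠ 0 ∧ D.eval p.2 ≠ 0) ∧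
        ratFun A B p.1 = (1 : ℝ) * ratFun A B p.2 ∧
        ratFun C D p.1 = ratFun C D p.2 + 2 * (k:ℝ) * Real.pi}.Finite := by
      apply rel_set_finite A B C D hB hD hAB hCD hr hθ 1 (2 * (k:ℝ) * Real.pi) (by norm_num)
      apply mul_ne_zero _ hπ
      intro h0
      have h3 : (k : ℝ) = 0 := by linarith [h0]
      exact hkne (by exact_mod_cast h3)
    apply (h1.union h2).subset
    rintro ⟨t, s⟩ ⟨hd1, hd2, hne, hsys⟩
    rcases hsys with ⟨ha, hb⟩ | ⟨ha, hb⟩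
    · left
      exact ⟨hd1, hd2, by rw [ha]; ring, hb⟩
    · right
      exact ⟨hd1, hd2, by rw [ha]; ring, hb⟩

/-- fibers of the curve are finite -/
lemma curve_fiber_finite (A B C D : Polynomial ℝ)
    (hAB : IsCoprime A B)
    (hr : ¬ (A.natDegree = 0 ∧ B.natDegree = 0)) (p : ℝ × ℝ) :
    {t : ℝ | t ∈ polarDomain B D ∧ polarCurve A B C D t = p}.Finite := by
  apply (ratFun_sq_level_finite hAB hr (p.1^2 + p.2^2)).subset
  rintro t ⟨hd, hc⟩
  refine ⟨hd.1, ?_⟩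
  have h1 : ratFun A B t * Real.cos (ratFun C D t) = p.1 := congrArg Prod.fst hc
  have h2 : ratFun A B t * Real.sin (ratFun C D t) = p.2 := congrArg Prod.snd hc
  have := Real.sin_sq_add_cos_sq (ratFun C D t)
  show (ratFun A B t)^2 = p.1^2 + p.2^2
  rw [← h1, ← h2]
  nlinarith [this]

theorem infinitely_many_self_intersections_iff
    (A B C D : Polynomial ℝ) (hB : B ≠ 0) (hD : D ≠ 0)
    (hAB : IsCoprime A B) (hCD : IsCoprime C D)
    (hr : ¬ (A.natDegree = 0 ∧ B.natDegree = 0))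
    (hθ : ¬ (C.natDegree = 0 ∧ D.natDegree = 0))
    (hproper : IsProperPolar A B C D) :
    (selfIntersections A B C D).Infinite ↔
    {k : ℤ | ∃ t s : ℝ, t ∈ polarDomain B D ∧ s ∈ polarDomain B D ∧ t ≠ s ∧
      ((ratFun A B t = ratFun A B s ∧
          ratFun C D t = ratFun C D s + 2 * (k : ℝ) * Real.pi) ∨
       (ratFun A B t = -(ratFun A B s) ∧
          ratFun C D t = ratFun C D s + (2 * (k : ℝ) + 1) * Real.pi))}.Infinite := by
  classical
  have hKdef : {k : ℤ | ∃ t s : ℝ, t ∈ polarDomain B D ∧ s ∈ polarDomain B D ∧ t ≠ s ∧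
      ((ratFun A B t = ratFun A B s ∧
          ratFun C D t = ratFun C D s + 2 * (k : ℝ) * Real.pi) ∨
       (ratFun A B t = -(ratFun A B s) ∧
          ratFun C D t = ratFun C D s + (2 * (k : ℝ) + 1) * Real.pi))}
      = {k : ℤ | ∃ q : ℝ × ℝ, q ∈ sysSetP A B C D k} := by
    ext k
    constructor
    · rintro ⟨t, s, ht, hs, hne, hsys⟩
      exact ⟨(t, s), ht, hs, hne, hsys⟩
    · rintro ⟨⟨t, s⟩, ht, hs, hne, hsys⟩
      exact ⟨t, s, ht, hs, hne, hsys⟩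
  rw [hKdef]
  constructor
  · -- forward direction
    intro hSI
    by_contra hK
    rw [Set.not_infinite] at hK
    apply hSI
    have hcover : selfIntersections A B C D ⊆ {((0:ℝ), (0:ℝ))} ∪
        ⋃ k ∈ {k : ℤ | ∃ q : ℝ × ℝ, q ∈ sysSetP A B C D k},
          (fun q : ℝ × ℝ => polarCurve A B C D q.1) '' sysSetP A B C D k := by
      rintro p ⟨t, s, ht, hs, hne, hpt, hps⟩
      by_cases hrt : ratFun A B t = 0
      · left
        rw [← hpt]
        unfold polarCurve
        rw [hrt]
        simp
      · right
        have hcurve : polarCurve A B C D t = polarCurve A B C D s := hpt.trans hps.symm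
        obtain ⟨k, hk⟩ := sysRel_backward hcurve hrt
        have hmem : (t, s) ∈ sysSetP A B C D k := ⟨ht, hs, hne, hk⟩
        simp only [Set.mem_iUnion]
        exact ⟨k, ⟨(t, s), hmem⟩, (t, s), hmem, hpt⟩
    apply Set.Finite.subset _ hcover
    apply (Set.finite_singleton _).union
    apply hK.biUnion
    intro k _
    exact (sysSetP_finite A B C D hB hD hAB hCD hr hθ hproper k).image _
  · -- backward direction
    intro hK
    by_contra hSI
    rw [Set.not_infinite] at hSI
    apply hK
    have hP : (⋃ p ∈ selfIntersections A B C D,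
        ({t : ℝ | t ∈ polarDomain B D ∧ polarCurve A B C D t = p} ×ˢ
         {t : ℝ | t ∈ polarDomain B D ∧ polarCurve A B C D t = p})).Finite := by
      apply hSI.biUnion
      intro p _
      exact (curve_fiber_finite A B C D hAB hr p).prod (curve_fiber_finite A B C D hAB hr p)
    have hcover : {k : ℤ | ∃ q : ℝ × ℝ, q ∈ sysSetP A B C D k} ⊆
        ⋃ q ∈ (⋃ p ∈ selfIntersections A B C D,
          ({t : ℝ | t ∈ polarDomain B D ∧ polarCurve A B C D t = p} ×ˢ
           {t : ℝ | t ∈ polarDomain B D ∧ polarCurve A B C D t = p})),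
          {k : ℤ | sysRel A B C D k q.1 q.2} := by
      rintro k ⟨⟨t, s⟩, ht, hs, hne, hsys⟩
      have hcurve : polarCurve A B C D t = polarCurve A B C D s := sysRel_forward hsys
      have hpSI : polarCurve A B C D t ∈ selfIntersections A B C D :=
        ⟨t, s, ht, hs, hne, rfl, hcurve.symm⟩
      apply Set.mem_biUnion (Set.mem_biUnion hpSI
        (⟨⟨ht, rfl⟩, ⟨hs, hcurve.symm⟩⟩ :
          (t, s) ∈ ({u : ℝ | u ∈ polarDomain B D ∧ polarCurve A B C D u = polarCurve A B C D t} ×ˢ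
            {u : ℝ | u ∈ polarDomain B D ∧ polarCurve A B C D u = polarCurve A B C D t})))
      exact hsys
    apply Set.Finite.subset _ hcover
    apply hP.biUnion
    intro q _
    apply Set.Subsingleton.finite
    intro k hk k' hk'
    exact sysRel_k_unique hk hk'

end
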